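/- Fix N, Q ∈ ℕ, integers 1 ≤ n₀ ≤ N and 2 < q₀ ≤ Q with n₀ ≡ −1 (mod q₀). Let f = 1_{{n₀}} and g = c_{q₀} (so g has range Q). Then at a = 1: C_{f,g}(N,1) = c_{q₀}(n₀+1) = φ(q₀), while ∑_{ℓ ≤ Q} (ĝ(ℓ)/φ(ℓ)) (∑_{n ≤ N} f(n) c_ℓ(n)) c_ℓ(1) = μ(q₀)²/φ(q₀); since φ(q₀) ≠ μ(q₀)²/φ(q₀) for q₀ > 2, the (Q)-Reef identity fails. -/
import Mathlib

open scoped BigOperators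
open ArithmeticFunction

/-- `n` is `Q`-smooth: every prime factor of `n` is `≤ Q`. -/
def QSmooth (Q n : ℕ) : Prop := ∀ p ∈ n.primeFactors, p ≤ Q
instance (Q n : ℕ) : Decidable (QSmooth Q n) := by unfold QSmooth; infer_instance
/-- `n` is `Q`-sifted: coprime to every prime `≤ Q`. -/
def QSifted (Q n : ℕ) : Prop := ∀ p ∈ n.primeFactors, Q < p
instance (Q n : ℕ) : Decidable (QSifted Q n) := by unfold QSifted; infer_instance
/-- Eratosthenes transform `F' = F ∗ μ`. -/
noncomputable def era (F : ℕ → ℂ) (d : ℕ) : ℂ :=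
  ∑ t ∈ d.divisors, F t * (moebius (d / t) : ℤ)
/-- Ramanujan sum `c_q(n) = ∑_{d ∣ (q,n)} d μ(q/d)`. -/
def ramanujanSum (q n : ℕ) : ℤ :=
  ∑ d ∈ (Nat.gcd q n).divisors, (d : ℤ) * moebius (q / d)

lemma totient_eq_sum_moebius (q : ℕ) (hq : 0 < q) :
    (q.totient : ℤ) = ∑ d ∈ q.divisors, (d : ℤ) * moebius (q / d) := by
  have h := (ArithmeticFunction.sum_eq_iff_sum_mul_moebius_eq
      (R := ℤ) (f := fun n => (n.totient : ℤ)) (g := fun n => (n : ℤ))).mp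
    (by intro n hn; exact_mod_cast Nat.sum_totient n) q hq
  simp only [Int.cast_id] at h
  rw [← h, Nat.sum_divisorsAntidiagonal' (f := fun x y => ((moebius x : ℤ)) * y)]
  exact Finset.sum_congr rfl fun i hi => by ring

lemma ram_of_dvd (q m : ℕ) (hq : 0 < q) (h : q ∣ m) :
    ramanujanSum q m = (q.totient : ℤ) := by
  rw [ramanujanSum, Nat.gcd_eq_left h, totient_eq_sum_moebius q hq]

lemma ram_of_coprime (q m : ℕ) (h : Nat.gcd q m = 1) :
    ramanujanSum q m = moebius q := by
  rw [ramanujanSum, h]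
  simp

/-- Counterexample 1: with `f = 1_{{n₀}}`, `g = c_{q₀}`, `n₀ ≡ −1 (mod q₀)`, at
`a = 1` the correlation equals `φ(q₀)` while the (Q)-Reef right-hand side equals
`μ(q₀)²/φ(q₀)`, and these differ for `q₀ > 2`. -/
theorem reef_counterexample (N Q n₀ q₀ : ℕ)
    (hn₀ : 1 ≤ n₀) (hn₀N : n₀ ≤ N) (hq₀ : 2 < q₀) (hq₀Q : q₀ ≤ Q)
    (hcong : q₀ ∣ n₀ + 1)
    (f : ℕ → ℂ) (hf : f = fun n => if n = n₀ then 1 else 0)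
    (g : ℕ → ℂ) (hg : g = fun m => (ramanujanSum q₀ m : ℂ))
    (ghat : ℕ → ℂ) (hghat : ghat = fun ℓ => if ℓ = q₀ then 1 else 0) :
    (∑ n ∈ Finset.Icc 1 N, f n * g (n + 1)) = (Nat.totient q₀ : ℂ) ∧
    (∑ ℓ ∈ Finset.Icc 1 Q,
        (ghat ℓ / (Nat.totient ℓ : ℂ)) *
          (∑ n ∈ Finset.Icc 1 N, f n * (ramanujanSum ℓ n : ℂ)) *
          (ramanujanSum ℓ 1 : ℂ)) =
      ((moebius q₀ : ℂ)) ^ 2 / (Nat.totient q₀ : ℂ) ∧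
    (Nat.totient q₀ : ℂ) ≠ ((moebius q₀ : ℂ)) ^ 2 / (Nat.totient q₀ : ℂ) := by
  have hq0 : 0 < q₀ := by omega
  have hn₀mem : n₀ ∈ Finset.Icc 1 N := Finset.mem_Icc.mpr ⟨hn₀, hn₀N⟩
  have hgcd : Nat.gcd q₀ n₀ = 1 := by
    have h1 : Nat.gcd q₀ n₀ ∣ n₀ + 1 := dvd_trans (Nat.gcd_dvd_left _ _) hcong
    have h2 : Nat.gcd q₀ n₀ ∣ n₀ := Nat.gcd_dvd_right _ _
    have h3 : Nat.gcd q₀ n₀ ∣ 1 := by simpa using Nat.dvd_sub h1 h2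
    exact Nat.dvd_one.mp h3
  have hramn₀ : ramanujanSum q₀ n₀ = moebius q₀ := ram_of_coprime _ _ hgcd
  have hram1 : ramanujanSum q₀ 1 = moebius q₀ :=
    ram_of_coprime _ _ (Nat.gcd_one_right q₀)
  have hφne : (q₀.totient : ℂ) ≠ 0 :=
    Nat.cast_ne_zero.mpr (Nat.totient_pos.mpr hq0).ne'
  refine ⟨?_, ?_, ?_⟩
  · subst hf hg
    rw [Finset.sum_eq_single n₀]
    · simp [ram_of_dvd q₀ (n₀ + 1) hq0 hcong]
    · intro b _ hb; simp [hb]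
    · intro h; exact absurd hn₀mem h
  · subst hf hghat
    rw [Finset.sum_eq_single q₀]
    · have hinner : (∑ n ∈ Finset.Icc 1 N,
          (if n = n₀ then (1 : ℂ) else 0) * (ramanujanSum q₀ n : ℂ)) =
          (moebius q₀ : ℂ) := by
        rw [Finset.sum_eq_single n₀]
        · simp [hramn₀]
        · intro b _ hb; simp [hb]
        · intro h; exact absurd hn₀mem h
      rw [hinner]
      simp only [if_pos rfl, hram1]
      push_cast
      ring
    · intro b _ hb; simp [hb]
    · intro h
      exact absurd (Finset.mem_Icc.mpr ⟨by omega, hq₀Q⟩) h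
  · intro h
    have hsq : (q₀.totient : ℂ) * (q₀.totient : ℂ) = (moebius q₀ : ℂ) ^ 2 := by
      field_simp at h
      linear_combination h
    have hZ : (q₀.totient : ℤ) * (q₀.totient : ℤ) = (moebius q₀) ^ 2 := by
      exact_mod_cast hsq
    have hμ : (moebius q₀) ^ 2 ≤ 1 := by
      rcases ArithmeticFunction.moebius_sq (n := q₀) with h'
      rw [h']
      split <;> norm_num
    have hφ2 : 2 ≤ q₀.totient := by
      by_contra hlt
      interval_cases h' : q₀.totient
      · exact absurd (Nat.totient_pos.mpr hq0) (by omega)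
      · rcases Nat.totient_eq_one_iff.mp h' with rfl | rfl <;> omega
    have : (4 : ℤ) ≤ (q₀.totient : ℤ) * (q₀.totient : ℤ) := by
      have : (2 : ℤ) ≤ (q₀.totient : ℤ) := by exact_mod_cast hφ2
      nlinarith
    omega
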